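/- Fix n ≥ 1 and a 0/1-matrix A with no submatrix [[1,1],[1,0]] in positions (a,b),(a,d),(c,b),(c,d) with a < c, b < d (i.e., whenever A_{a,b}=A_{a,d}=A_{c,b}=1 with a<c, b<d, also A_{c,d}=1). Let H be the graph on vertex set {(i,j) : A_{i,j}=1} with edges {(a,d),(c,b)} whenever a < c, b < d and A_{a,b}=A_{a,d}=A_{c,b}=A_{c,d}=1. For 1 ≤ i ≤ n−1, let H_i be the subgraph of H consisting of all edges whose upper-right endpoint lies in row i, i.e., edges {(i,d),(c,b)} with c > i and b < d. Then each H_i is co-chordal: the complement of H_i (on the vertex set of H_i) is a chordal graph. -/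

import Mathlib

/-- A graph is chordal if every cycle of length at least 4 has a chord
(an edge of the graph between two non-consecutive vertices of the cycle). -/
def IsChordal {W : Type} (G : SimpleGraph W) : Prop :=
  ∀ (p : ℕ), 4 ≤ p → ∀ v : ZMod p → W, Function.Injective v →
    (∀ i, G.Adj (v i) (v (i + 1))) →
    ∃ i j : ZMod p, G.Adj (v i) (v j) ∧ j ≠ i + 1 ∧ i ≠ j + 1

/-- The graph `H` of Construction 3.5: vertices are the positions of the ones of the
0/1 matrix `A`, and edges are the anti-diagonals `{(a,d),(c,b)}` (`a < c`, `b < d`) of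
the all-ones 2×2 submatrices of `A`. -/
def Hgraph {n m : ℕ} (A : Fin n → Fin m → Prop) :
    SimpleGraph {p : Fin n × Fin m // A p.1 p.2} where
  Adj p q := (p.1.1 < q.1.1 ∧ q.1.2 < p.1.2 ∧ A p.1.1 q.1.2 ∧ A q.1.1 p.1.2) ∨
             (q.1.1 < p.1.1 ∧ p.1.2 < q.1.2 ∧ A q.1.1 p.1.2 ∧ A p.1.1 q.1.2)
  symm := by tauto
  loopless := ⟨by rintro p (⟨h, _⟩ | ⟨h, _⟩) <;> exact absurd h (lt_irrefl _)⟩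

/-- The subgraph `H_i` of `H`, on the vertices of `H` in rows `≥ i`, consisting of the
edges of `H` whose upper-right endpoint lies in row `i`. -/
def Hi {n m : ℕ} (A : Fin n → Fin m → Prop) (i : Fin n) :
    SimpleGraph {p : Fin n × Fin m // A p.1 p.2 ∧ i ≤ p.1.1} where
  Adj p q := (Hgraph A).Adj ⟨p.1, p.2.1⟩ ⟨q.1, q.2.1⟩ ∧ (p.1.1 = i ∨ q.1.1 = i)
  symm := ⟨by
    rintro p q ⟨h, h'⟩
    exact ⟨(Hgraph A).symm.symm _ _ h, h'.symm⟩⟩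
  loopless := ⟨by rintro p ⟨h, _⟩; exact (Hgraph A).loopless.irrefl _ h⟩

lemma zmod_ne' {p a b : ℕ} (hab : a < b) (h : b - a < p) :
    (a : ZMod p) ≠ (b : ZMod p) := by
  intro h'
  have h2 : a ≡ b [MOD p] := (ZMod.natCast_eq_natCast_iff _ _ _).mp h'
  have h3 : p ∣ b - a := (Nat.modEq_iff_dvd' (le_of_lt hab)).mp h2
  have := Nat.le_of_dvd (by omega) h3
  omega

lemma keyHi {n m : ℕ} (A : Fin n → Fin m → Prop)
    (hA : ∀ (a c : Fin n) (b d : Fin m), a < c → b < d →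
      A a b → A a d → A c b → A c d)
    (i : Fin n)
    {u v x y : {p : Fin n × Fin m // A p.1 p.2 ∧ i ≤ p.1.1}}
    (hu : u.1.1 = i) (hv : v.1.1 = i) (hx : ¬ x.1.1 = i) (hy : ¬ y.1.1 = i)
    (h1 : (Hi A i).Adj u x) (h2 : (Hi A i).Adj v y)
    (h3 : ¬(Hi A i).Adj v x) (h4 : ¬(Hi A i).Adj u y) : False := by
  have hix : i < x.1.1 := lt_of_le_of_ne x.2.2 (Ne.symm hx)
  have hiy : i < y.1.1 := lt_of_le_of_ne y.2.2 (Ne.symm hy)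
  obtain ⟨hg1, -⟩ := h1
  obtain ⟨hg2, -⟩ := h2
  have h3' : ¬ (Hgraph A).Adj ⟨v.1, v.2.1⟩ ⟨x.1, x.2.1⟩ := fun h => h3 ⟨h, Or.inl hv⟩
  have h4' : ¬ (Hgraph A).Adj ⟨u.1, u.2.1⟩ ⟨y.1, y.2.1⟩ := fun h => h4 ⟨h, Or.inl hu⟩
  rcases hg1 with ⟨-, hbd, hAib, hAcd⟩ | ⟨hlt, -⟩
  swap
  · rw [hu] at hlt; exact absurd (lt_trans hix hlt) (lt_irrefl _)
  rcases hg2 with ⟨-, hb'd', hAib', hAc'd'⟩ | ⟨hlt, -⟩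
  swap
  · rw [hv] at hlt; exact absurd (lt_trans hiy hlt) (lt_irrefl _)
  -- hbd : x.1.2 < u.1.2, hAib : A u.1.1 x.1.2, hAcd : A x.1.1 u.1.2
  -- hb'd' : y.1.2 < v.1.2, hAib' : A v.1.1 y.1.2, hAc'd' : A y.1.1 v.1.2
  rw [hu] at hAib
  rw [hv] at hAib'
  by_cases hbd2 : x.1.2 < v.1.2
  · -- then A x.1.1 v.1.2, so v ~ x, contradiction
    have hAxv : A x.1.1 v.1.2 := by
      refine hA i x.1.1 x.1.2 v.1.2 hix hbd2 hAib ?_ x.2.1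
      have := v.2.1; rwa [hv] at this
    refine h3' (Or.inl ⟨?_, hbd2, ?_, hAxv⟩)
    · rw [hv]; exact hix
    · rwa [hv]
  · -- then y.1.2 < v.1.2 ≤ x.1.2 < u.1.2, get A y.1.1 u.1.2, so u ~ y, contradiction
    have hyd : y.1.2 < u.1.2 := lt_trans (lt_of_lt_of_le hb'd' (not_lt.mp hbd2)) hbd
    have hAyu : A y.1.1 u.1.2 := by
      refine hA i y.1.1 y.1.2 u.1.2 hiy hyd hAib' ?_ y.2.1
      have := u.2.1; rwa [hu] at this
    refine h4' (Or.inl ⟨?_, hyd, ?_, hAyu⟩)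
    · rw [hu]; exact hiy
    · rwa [hu]

/-- if the 0/1 matrix `A` is Γ-free (no submatrix `[[1,1],[1,0]]` with rows
`a < c` and columns `b < d`), then for each `1 ≤ i ≤ n-1` the subgraph `H_i` of `H` is
co-chordal: the complement of `H_i` on the vertex set of `H_i` is chordal. -/
theorem stmt7 {n m : ℕ} (A : Fin n → Fin m → Prop)
    (hA : ∀ (a c : Fin n) (b d : Fin m), a < c → b < d →
      A a b → A a d → A c b → A c d)
    (i : Fin n) (hi : (i : ℕ) + 2 ≤ n) :
    IsChordal ((Hi A i)ᶜ) := by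
  intro p hp v hinj hadj
  have hnadj : ∀ k : ZMod p, ¬ (Hi A i).Adj (v k) (v (k + 1)) :=
    fun k => ((SimpleGraph.compl_adj _ _ _).mp (hadj k)).2
  have notadj : ∀ j k : ZMod p, ((v j).1.1 = i ↔ (v k).1.1 = i) →
      ¬ (Hi A i).Adj (v j) (v k) := by
    rintro j k hjk ⟨hg, hcase⟩
    have hrows : (v j).1.1 = i ∧ (v k).1.1 = i := by
      rcases hcase with h' | h'
      · exact ⟨h', hjk.mp h'⟩
      · exact ⟨hjk.mpr h', h'⟩
    rcases hg with ⟨hlt, -⟩ | ⟨hlt, -⟩ <;> rw [hrows.1, hrows.2] at hlt <;>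
      exact lt_irrefl _ hlt
  have chord : ∀ j k : ZMod p, j ≠ k → j ≠ k + 1 → k ≠ j + 1 →
      ((v j).1.1 = i ↔ (v k).1.1 = i) →
      ∃ a b : ZMod p, ((Hi A i)ᶜ).Adj (v a) (v b) ∧ b ≠ a + 1 ∧ a ≠ b + 1 := by
    intro j k h1 h2 h3 h4
    exact ⟨j, k, (SimpleGraph.compl_adj _ _ _).mpr ⟨fun h => h1 (hinj h), notadj j k h4⟩, h3, h2⟩
  rcases Nat.lt_or_ge p 5 with h5 | h5
  · -- p = 4
    have hp4 : p = 4 := by omega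
    subst hp4
    by_contra hcon
    push_neg at hcon
    have hch : ∀ j k : ZMod 4, j ≠ k → j ≠ k + 1 → k ≠ j + 1 →
        ((v j).1.1 = i ↔ (v k).1.1 = i) → False := by
      intro j k h1 h2 h3 h4
      obtain ⟨a, b, hab, hb, ha⟩ := chord j k h1 h2 h3 h4
      exact ha (hcon a b hab hb)
    have hdiag : ∀ j k : ZMod 4, j ≠ k → j ≠ k + 1 → k ≠ j + 1 →
        (Hi A i).Adj (v j) (v k) := by
      intro j k h1 h2 h3
      by_contra hno
      have := hcon j k ((SimpleGraph.compl_adj _ _ _).mpr ⟨fun h => h1 (hinj h), hno⟩) h3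
      exact h2 this
    have e0 : (0 : ZMod 4) + 1 = 1 := by decide
    have e1 : (1 : ZMod 4) + 1 = 2 := by decide
    have e2 : (2 : ZMod 4) + 1 = 3 := by decide
    have e3 : (3 : ZMod 4) + 1 = 0 := by decide
    have n01 : ¬ (Hi A i).Adj (v 0) (v 1) := by have := hnadj 0; rwa [e0] at this
    have n12 : ¬ (Hi A i).Adj (v 1) (v 2) := by have := hnadj 1; rwa [e1] at this
    have n23 : ¬ (Hi A i).Adj (v 2) (v 3) := by have := hnadj 2; rwa [e2] at this
    have n30 : ¬ (Hi A i).Adj (v 3) (v 0) := by have := hnadj 3; rwa [e3] at this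
    have d02 : (Hi A i).Adj (v 0) (v 2) := hdiag 0 2 (by decide) (by decide) (by decide)
    have d13 : (Hi A i).Adj (v 1) (v 3) := hdiag 1 3 (by decide) (by decide) (by decide)
    have d20 : (Hi A i).Adj (v 2) (v 0) := d02.symm
    have d31 : (Hi A i).Adj (v 3) (v 1) := d13.symm
    have q02a : (0 : ZMod 4) ≠ 2 := by decide
    have q02b : (0 : ZMod 4) ≠ 2 + 1 := by decide
    have q02c : (2 : ZMod 4) ≠ 0 + 1 := by decide
    have q13a : (1 : ZMod 4) ≠ 3 := by decide
    have q13b : (1 : ZMod 4) ≠ 3 + 1 := by decide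
    have q13c : (3 : ZMod 4) ≠ 1 + 1 := by decide
    by_cases hs0 : (v (0 : ZMod 4)).1.1 = i <;>
      by_cases hs1 : (v (1 : ZMod 4)).1.1 = i <;>
      by_cases hs2 : (v (2 : ZMod 4)).1.1 = i <;>
      by_cases hs3 : (v (3 : ZMod 4)).1.1 = i
    all_goals first
      | exact hch 0 2 q02a q02b q02c (iff_of_true hs0 hs2)
      | exact hch 0 2 q02a q02b q02c (iff_of_false hs0 hs2)
      | exact hch 1 3 q13a q13b q13c (iff_of_true hs1 hs3)
      | exact hch 1 3 q13a q13b q13c (iff_of_false hs1 hs3)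
      | skip
    -- remaining: (s0,s1,¬s2,¬s3), (s0,¬s1,¬s2,s3), (¬s0,s1,s2,¬s3), (¬s0,¬s1,s2,s3)
    · exact keyHi A hA i hs0 hs1 hs2 hs3 d02 d13 n12 (fun h => n30 h.symm)
    · exact keyHi A hA i hs3 hs0 hs1 hs2 d31 d02 n01 (fun h => n23 h.symm)
    · exact keyHi A hA i hs1 hs2 hs3 hs0 d13 d20 n23 (fun h => n01 h.symm)
    · exact keyHi A hA i hs2 hs3 hs0 hs1 d20 d31 n30 (fun h => n12 h.symm)
  · -- p ≥ 5
    have H02 : (0 : ZMod p) ≠ 2 := by simpa using zmod_ne' (p := p) (a := 0) (b := 2) (by norm_num) (by omega)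
    have H03 : (0 : ZMod p) ≠ 3 := by simpa using zmod_ne' (p := p) (a := 0) (b := 3) (by norm_num) (by omega)
    have H04 : (0 : ZMod p) ≠ 4 := by simpa using zmod_ne' (p := p) (a := 0) (b := 4) (by norm_num) (by omega)
    have H12 : (1 : ZMod p) ≠ 2 := by simpa using zmod_ne' (p := p) (a := 1) (b := 2) (by norm_num) (by omega)
    have H13 : (1 : ZMod p) ≠ 3 := by simpa using zmod_ne' (p := p) (a := 1) (b := 3) (by norm_num) (by omega)
    have H14 : (1 : ZMod p) ≠ 4 := by simpa using zmod_ne' (p := p) (a := 1) (b := 4) (by norm_num) (by omega)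
    have H15 : (1 : ZMod p) ≠ 5 := by simpa using zmod_ne' (p := p) (a := 1) (b := 5) (by norm_num) (by omega)
    have H23 : (2 : ZMod p) ≠ 3 := by simpa using zmod_ne' (p := p) (a := 2) (b := 3) (by norm_num) (by omega)
    have H24 : (2 : ZMod p) ≠ 4 := by simpa using zmod_ne' (p := p) (a := 2) (b := 4) (by norm_num) (by omega)
    have H25 : (2 : ZMod p) ≠ 5 := by simpa using zmod_ne' (p := p) (a := 2) (b := 5) (by norm_num) (by omega)
    have H34 : (3 : ZMod p) ≠ 4 := by simpa using zmod_ne' (p := p) (a := 3) (b := 4) (by norm_num) (by omega)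
    have e0 : (0 : ZMod p) + 1 = 1 := by rw [zero_add]
    have e1 : (1 : ZMod p) + 1 = 2 := by norm_num
    have e2 : (2 : ZMod p) + 1 = 3 := by norm_num
    have e3 : (3 : ZMod p) + 1 = 4 := by norm_num
    have e4 : (4 : ZMod p) + 1 = 5 := by norm_num
    by_cases c02 : (v (0 : ZMod p)).1.1 = i ↔ (v (2 : ZMod p)).1.1 = i
    · exact chord 0 2 H02 (by rw [e2]; exact H03) (by rw [e0]; exact H12.symm) c02
    by_cases c13 : (v (1 : ZMod p)).1.1 = i ↔ (v (3 : ZMod p)).1.1 = i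
    · exact chord 1 3 H13 (by rw [e3]; exact H14) (by rw [e1]; exact H23.symm) c13
    by_cases c01 : (v (0 : ZMod p)).1.1 = i ↔ (v (1 : ZMod p)).1.1 = i
    · by_cases c14 : (v (1 : ZMod p)).1.1 = i ↔ (v (4 : ZMod p)).1.1 = i
      · exact chord 1 4 H14 (by rw [e4]; exact H15) (by rw [e1]; exact H24.symm) c14
      · exact chord 2 4 H24 (by rw [e4]; exact H25) (by rw [e2]; exact H34.symm) (by tauto)
    · exact chord 0 3 H03 (by rw [e3]; exact H04) (by rw [e0]; exact H13.symm) (by tauto)
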